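/- arXiv:1905.07603 — 2 statements merged into one kernel-verified Lean document; each statement's English description precedes it below -/
import Mathlib

section
/- The fixed-point set of the automorphism τ̂ of Ĥ_4 equals the subspace spanned by (a+b)⊗t^{2m} for m ∈ ℤ, (a-b)⊗t^{2m+1}, c⊗t^{2m+1}, d⊗t^{2m+1} for m ∈ ℤ, together with k, and this fixed-point set is a Lie subalgebra of Ĥ_4. -/
/-- The values of the twist `τ̂` on the basis of the affine Nappi-Witten algebra
`Ĥ₄ = H₄ ⊗ ℂ[t,t⁻¹] ⊕ ℂk`: the index `Sum.inl (0,n), …, Sum.inl (3,n)` corresponds to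
`a⊗tⁿ, b⊗tⁿ, c⊗tⁿ, d⊗tⁿ`, and `Sum.inr ()` to `k`; then
`τ̂(h⊗tᵐ + s·k) = (-1)ᵐ τ(h)⊗tᵐ + s·k`, where `τ(a)=b, τ(b)=a, τ(c)=-c, τ(d)=-d`. -/
noncomputable def tauHatValues {L : Type} [AddCommGroup L] [Module ℂ L]
    (a b c d : ℤ → L) (k : L) : (Fin 4 × ℤ) ⊕ Unit → L :=
  Sum.elim (fun p => (-1 : ℂ) ^ p.2 • (![b p.2, a p.2, -(c p.2), -(d p.2)] p.1))
    (fun _ => k)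

/-- The spanning set of the twisted affine Nappi-Witten algebra `Ĥ₄[τ]`:
`(a+b)⊗t^{2m}`, `(a-b)⊗t^{2m+1}`, `c⊗t^{2m+1}`, `d⊗t^{2m+1}` (`m ∈ ℤ`), and `k`. -/
def twistedNWSet {L : Type} (a b c d : ℤ → L) (k : L) [AddCommGroup L] : Set L :=
  Set.range (fun m : ℤ => a (2 * m) + b (2 * m)) ∪
  Set.range (fun m : ℤ => a (2 * m + 1) - b (2 * m + 1)) ∪
  Set.range (fun m : ℤ => c (2 * m + 1)) ∪
  Set.range (fun m : ℤ => d (2 * m + 1)) ∪ {k}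

/-- The fixed-point set of the automorphism `τ̂` of `Ĥ₄` equals the span of
`(a+b)⊗t^{2m}`, `(a-b)⊗t^{2m+1}`, `c⊗t^{2m+1}`, `d⊗t^{2m+1}` (`m ∈ ℤ`) and `k`,
and this fixed-point set is a Lie subalgebra of `Ĥ₄` (closed under the bracket). -/
theorem tauHat_fixed_points (L : Type) [LieRing L] [LieAlgebra ℂ L]
    (v : Module.Basis ((Fin 4 × ℤ) ⊕ Unit) ℂ L)
    (a b c d : ℤ → L) (k : L)
    (hva : ∀ n : ℤ, v (Sum.inl (0, n)) = a n)
    (hvb : ∀ n : ℤ, v (Sum.inl (1, n)) = b n)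
    (hvc : ∀ n : ℤ, v (Sum.inl (2, n)) = c n)
    (hvd : ∀ n : ℤ, v (Sum.inl (3, n)) = d n)
    (hvk : v (Sum.inr ()) = k)
    (hab : ∀ m n : ℤ, ⁅a m, b n⁆ = c (m + n) + (if m + n = 0 then (m : ℂ) else 0) • k)
    (haa : ∀ m n : ℤ, ⁅a m, a n⁆ = 0)
    (hbb : ∀ m n : ℤ, ⁅b m, b n⁆ = 0)
    (hda : ∀ m n : ℤ, ⁅d m, a n⁆ = a (m + n))
    (hdb : ∀ m n : ℤ, ⁅d m, b n⁆ = -b (m + n))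
    (hdd : ∀ m n : ℤ, ⁅d m, d n⁆ = 0)
    (hcd : ∀ m n : ℤ, ⁅c m, d n⁆ = (if m + n = 0 then (m : ℂ) else 0) • k)
    (hca : ∀ m n : ℤ, ⁅c m, a n⁆ = 0)
    (hcb : ∀ m n : ℤ, ⁅c m, b n⁆ = 0)
    (hcc : ∀ m n : ℤ, ⁅c m, c n⁆ = 0)
    (hk : ∀ x : L, ⁅k, x⁆ = 0) :
    ({x : L | Module.Basis.constr v ℂ (tauHatValues a b c d k) x = x} =
      (Submodule.span ℂ (twistedNWSet a b c d k) : Set L)) ∧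
    (∀ x ∈ Submodule.span ℂ (twistedNWSet a b c d k),
      ∀ y ∈ Submodule.span ℂ (twistedNWSet a b c d k),
        ⁅x, y⁆ ∈ Submodule.span ℂ (twistedNWSet a b c d k)) := by
  classical
  set T := Module.Basis.constr v ℂ (tauHatValues a b c d k) with hT
  set M := Submodule.span ℂ (twistedNWSet a b c d k) with hM
  -- membership helpers
  have memS : ∀ x : L, ((∃ m : ℤ, a (2*m) + b (2*m) = x) ∨ (∃ m : ℤ, a (2*m+1) - b (2*m+1) = x)
      ∨ (∃ m : ℤ, c (2*m+1) = x) ∨ (∃ m : ℤ, d (2*m+1) = x) ∨ x = k) → x ∈ M := by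
    intro x hx
    apply Submodule.subset_span
    simp only [twistedNWSet, Set.mem_union, Set.mem_range, Set.mem_singleton_iff]
    tauto
  have hkM : k ∈ M := memS k (by tauto)
  have hAM : ∀ n : ℤ, Even n → a n + b n ∈ M := by
    rintro n ⟨m, rfl⟩
    exact memS _ (Or.inl ⟨m, by rw [two_mul]⟩)
  have hBM : ∀ n : ℤ, Odd n → a n - b n ∈ M := by
    rintro n ⟨m, rfl⟩
    exact memS _ (Or.inr (Or.inl ⟨m, rfl⟩))
  have hCM : ∀ n : ℤ, Odd n → c n ∈ M := by
    rintro n ⟨m, rfl⟩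
    exact memS _ (Or.inr (Or.inr (Or.inl ⟨m, rfl⟩)))
  have hDM : ∀ n : ℤ, Odd n → d n ∈ M := by
    rintro n ⟨m, rfl⟩
    exact memS _ (Or.inr (Or.inr (Or.inr (Or.inl ⟨m, rfl⟩))))
  -- derived bracket relations
  have hxk : ∀ x : L, ⁅x, k⁆ = 0 := fun x => by rw [← lie_skew, hk, neg_zero]
  have hba : ∀ m n : ℤ, ⁅b m, a n⁆ = -c (n + m) - (if n + m = 0 then (n:ℂ) else 0) • k := by
    intro m n; rw [← lie_skew, hab]; abel
  have had : ∀ m n : ℤ, ⁅a m, d n⁆ = -a (n + m) := fun m n => by rw [← lie_skew, hda]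
  have hbd : ∀ m n : ℤ, ⁅b m, d n⁆ = b (n + m) := fun m n => by rw [← lie_skew, hdb, neg_neg]
  have hdc : ∀ m n : ℤ, ⁅d m, c n⁆ = -((if n + m = 0 then (n:ℂ) else 0) • k) := fun m n => by
    rw [← lie_skew, hcd]
  have hac : ∀ m n : ℤ, ⁅a m, c n⁆ = 0 := fun m n => by rw [← lie_skew, hca, neg_zero]
  have hbc : ∀ m n : ℤ, ⁅b m, c n⁆ = 0 := fun m n => by rw [← lie_skew, hcb, neg_zero]
  -- values of T on a,b,c,d,k
  have Ta : ∀ n : ℤ, T (a n) = ((-1:ℂ)^n) • b n := by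
    intro n; rw [← hva n, hT, Module.Basis.constr_basis]; simp [tauHatValues]
  have Tb : ∀ n : ℤ, T (b n) = ((-1:ℂ)^n) • a n := by
    intro n; rw [← hvb n, hT, Module.Basis.constr_basis]; simp [tauHatValues]
  have Tc : ∀ n : ℤ, T (c n) = ((-1:ℂ)^n) • (-(c n)) := by
    intro n; rw [← hvc n, hT, Module.Basis.constr_basis]; simp [tauHatValues, hvc]
  have Td : ∀ n : ℤ, T (d n) = ((-1:ℂ)^n) • (-(d n)) := by
    intro n; rw [← hvd n, hT, Module.Basis.constr_basis]; simp [tauHatValues, hvd]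
  have Tk : T k = k := by rw [← hvk, hT, Module.Basis.constr_basis]; simp [tauHatValues, hvk]
  -- bracket closure on generators
  have bAA : ∀ m n : ℤ, ⁅a (2*m) + b (2*m), a (2*n) + b (2*n)⁆ ∈ M := by
    intro m n
    have hidx : (2*n + 2*m : ℤ) = 2*m + 2*n := by ring
    have e : ⁅a (2*m) + b (2*m), a (2*n) + b (2*n)⁆
        = (if (2*m + 2*n : ℤ) = 0 then ((2*m : ℤ) : ℂ) else 0) • k
          - (if (2*m + 2*n : ℤ) = 0 then ((2*n : ℤ) : ℂ) else 0) • k := by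
      simp only [add_lie, lie_add, haa, hbb, hab, hba, hidx]
      abel
    rw [e]
    exact M.sub_mem (M.smul_mem _ hkM) (M.smul_mem _ hkM)
  have bAB : ∀ m n : ℤ, ⁅a (2*m) + b (2*m), a (2*n+1) - b (2*n+1)⁆ ∈ M := by
    intro m n
    have hidx1 : (2*m + (2*n+1) : ℤ) = 2*(m+n)+1 := by ring
    have hidx2 : ((2*n+1) + 2*m : ℤ) = 2*(m+n)+1 := by ring
    have e : ⁅a (2*m) + b (2*m), a (2*n+1) - b (2*n+1)⁆
        = (-(c (2*(m+n)+1)) - c (2*(m+n)+1))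
          - (if (2*(m+n)+1 : ℤ) = 0 then ((2*m : ℤ) : ℂ) else 0) • k
          - (if (2*(m+n)+1 : ℤ) = 0 then ((2*n+1 : ℤ) : ℂ) else 0) • k := by
      simp only [add_lie, lie_sub, haa, hbb, hab, hba, hidx1, hidx2]
      abel
    rw [e]
    exact M.sub_mem (M.sub_mem (M.sub_mem (M.neg_mem (hCM _ ⟨m+n, rfl⟩)) (hCM _ ⟨m+n, rfl⟩))
      (M.smul_mem _ hkM)) (M.smul_mem _ hkM)
  have bAC : ∀ m n : ℤ, ⁅a (2*m) + b (2*m), c (2*n+1)⁆ ∈ M := by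
    intro m n
    have e : ⁅a (2*m) + b (2*m), c (2*n+1)⁆ = 0 := by
      simp only [add_lie, hac, hbc, add_zero]
    rw [e]; exact M.zero_mem
  have bAD : ∀ m n : ℤ, ⁅a (2*m) + b (2*m), d (2*n+1)⁆ ∈ M := by
    intro m n
    have hidx : ((2*n+1) + 2*m : ℤ) = 2*(m+n)+1 := by ring
    have e : ⁅a (2*m) + b (2*m), d (2*n+1)⁆
        = -(a (2*(m+n)+1) - b (2*(m+n)+1)) := by
      simp only [add_lie, had, hbd, hidx]
      abel
    rw [e]
    exact M.neg_mem (hBM _ ⟨m+n, rfl⟩)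
  have bBB : ∀ m n : ℤ, ⁅a (2*m+1) - b (2*m+1), a (2*n+1) - b (2*n+1)⁆ ∈ M := by
    intro m n
    have hidx1 : ((2*m+1) + (2*n+1) : ℤ) = 2*(m+n)+2 := by ring
    have hidx2 : ((2*n+1) + (2*m+1) : ℤ) = 2*(m+n)+2 := by ring
    have e : ⁅a (2*m+1) - b (2*m+1), a (2*n+1) - b (2*n+1)⁆
        = (if (2*(m+n)+2 : ℤ) = 0 then ((2*n+1 : ℤ) : ℂ) else 0) • k
          - (if (2*(m+n)+2 : ℤ) = 0 then ((2*m+1 : ℤ) : ℂ) else 0) • k := by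
      simp only [sub_lie, lie_sub, haa, hbb, hab, hba, hidx1, hidx2]
      abel
    rw [e]
    exact M.sub_mem (M.smul_mem _ hkM) (M.smul_mem _ hkM)
  have bBC : ∀ m n : ℤ, ⁅a (2*m+1) - b (2*m+1), c (2*n+1)⁆ ∈ M := by
    intro m n
    have e : ⁅a (2*m+1) - b (2*m+1), c (2*n+1)⁆ = 0 := by
      simp only [sub_lie, hac, hbc, sub_zero]
    rw [e]; exact M.zero_mem
  have bBD : ∀ m n : ℤ, ⁅a (2*m+1) - b (2*m+1), d (2*n+1)⁆ ∈ M := by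
    intro m n
    have hidx : ((2*n+1) + (2*m+1) : ℤ) = 2*(m+n+1) := by ring
    have e : ⁅a (2*m+1) - b (2*m+1), d (2*n+1)⁆
        = -(a (2*(m+n+1)) + b (2*(m+n+1))) := by
      simp only [sub_lie, had, hbd, hidx]
      abel
    rw [e]
    exact M.neg_mem (hAM _ ⟨m+n+1, by ring⟩)
  have bCC : ∀ m n : ℤ, ⁅c (2*m+1), c (2*n+1)⁆ ∈ M := by
    intro m n; rw [hcc]; exact M.zero_mem
  have bCD : ∀ m n : ℤ, ⁅c (2*m+1), d (2*n+1)⁆ ∈ M := by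
    intro m n; rw [hcd]; exact M.smul_mem _ hkM
  have bDD : ∀ m n : ℤ, ⁅d (2*m+1), d (2*n+1)⁆ ∈ M := by
    intro m n; rw [hdd]; exact M.zero_mem
  have key : ∀ x ∈ twistedNWSet a b c d k, ∀ y ∈ twistedNWSet a b c d k, ⁅x, y⁆ ∈ M := by
    intro x hx y hy
    simp only [twistedNWSet, Set.mem_union, Set.mem_range, Set.mem_singleton_iff] at hx hy
    rcases hx with ((((⟨m, rfl⟩|⟨m, rfl⟩)|⟨m, rfl⟩)|⟨m, rfl⟩)|rfl) <;>
      rcases hy with ((((⟨n, rfl⟩|⟨n, rfl⟩)|⟨n, rfl⟩)|⟨n, rfl⟩)|rfl)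
    · exact bAA m n
    · exact bAB m n
    · exact bAC m n
    · exact bAD m n
    · rw [hxk]; exact M.zero_mem
    · rw [← lie_skew]; exact M.neg_mem (bAB n m)
    · exact bBB m n
    · exact bBC m n
    · exact bBD m n
    · rw [hxk]; exact M.zero_mem
    · rw [← lie_skew]; exact M.neg_mem (bAC n m)
    · rw [← lie_skew]; exact M.neg_mem (bBC n m)
    · exact bCC m n
    · exact bCD m n
    · rw [hxk]; exact M.zero_mem
    · rw [← lie_skew]; exact M.neg_mem (bAD n m)
    · rw [← lie_skew]; exact M.neg_mem (bBD n m)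
    · rw [← lie_skew]; exact M.neg_mem (bCD n m)
    · exact bDD m n
    · rw [hxk]; exact M.zero_mem
    · rw [hk]; exact M.zero_mem
    · rw [hk]; exact M.zero_mem
    · rw [hk]; exact M.zero_mem
    · rw [hk]; exact M.zero_mem
    · rw [hk]; exact M.zero_mem
  constructor
  · -- fixed points = span
    apply Set.Subset.antisymm
    · -- fixed ⊆ span
      intro x hx
      have hx' : T x = x := hx
      have base : ∀ i, v i + T (v i) ∈ M := by
        rintro (⟨p, n⟩ | ⟨⟩)
        · fin_cases p
          · show v (Sum.inl (0, n)) + T (v (Sum.inl (0, n))) ∈ M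
            rw [hva, Ta]
            rcases Int.even_or_odd n with he | ho
            · rw [he.neg_one_zpow, one_smul]; exact hAM n he
            · rw [ho.neg_one_zpow, neg_one_smul, ← sub_eq_add_neg]; exact hBM n ho
          · show v (Sum.inl (1, n)) + T (v (Sum.inl (1, n))) ∈ M
            rw [hvb, Tb]
            rcases Int.even_or_odd n with he | ho
            · rw [he.neg_one_zpow, one_smul, add_comm]; exact hAM n he
            · rw [ho.neg_one_zpow, neg_one_smul]
              have : b n + -a n = -(a n - b n) := by abel
              rw [this]; exact M.neg_mem (hBM n ho)
          · show v (Sum.inl (2, n)) + T (v (Sum.inl (2, n))) ∈ M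
            rw [hvc, Tc]
            rcases Int.even_or_odd n with he | ho
            · rw [he.neg_one_zpow, one_smul, add_neg_cancel]; exact M.zero_mem
            · rw [ho.neg_one_zpow, neg_one_smul, neg_neg]
              exact M.add_mem (hCM n ho) (hCM n ho)
          · show v (Sum.inl (3, n)) + T (v (Sum.inl (3, n))) ∈ M
            rw [hvd, Td]
            rcases Int.even_or_odd n with he | ho
            · rw [he.neg_one_zpow, one_smul, add_neg_cancel]; exact M.zero_mem
            · rw [ho.neg_one_zpow, neg_one_smul, neg_neg]
              exact M.add_mem (hDM n ho) (hDM n ho)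
        · rw [hvk, Tk]; exact M.add_mem hkM hkM
      have hP : ∀ y : L, y + T y ∈ M := by
        intro y
        have hy : y ∈ Submodule.span ℂ (Set.range v) := by rw [v.span_eq]; trivial
        induction hy using Submodule.span_induction with
        | mem z hz => obtain ⟨i, rfl⟩ := hz; exact base i
        | zero => rw [map_zero, add_zero]; exact M.zero_mem
        | add z w _ _ hz hw =>
          rw [map_add]
          have := M.add_mem hz hw
          have e : z + T z + (w + T w) = z + w + (T z + T w) := by abel
          rwa [e] at this
        | smul r z _ hz =>
          rw [map_smul, ← smul_add]
          exact M.smul_mem r hz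
      have h2 := hP x
      rw [hx'] at h2
      have hxx : ((2:ℂ))⁻¹ • (x + x) = x := by
        rw [← two_smul ℂ, smul_smul]; norm_num
      rw [← hxx]
      exact M.smul_mem _ h2
    · -- span ⊆ fixed
      intro x hx
      show T x = x
      induction hx using Submodule.span_induction with
      | mem z hz =>
        simp only [twistedNWSet, Set.mem_union, Set.mem_range, Set.mem_singleton_iff] at hz
        rcases hz with ((((⟨m, rfl⟩|⟨m, rfl⟩)|⟨m, rfl⟩)|⟨m, rfl⟩)|rfl)
        · have he : Even (2*m : ℤ) := ⟨m, by ring⟩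
          rw [map_add, Ta, Tb, he.neg_one_zpow, one_smul, one_smul, add_comm]
        · have ho : Odd (2*m+1 : ℤ) := ⟨m, rfl⟩
          rw [map_sub, Ta, Tb, ho.neg_one_zpow, neg_one_smul, neg_one_smul]
          abel
        · have ho : Odd (2*m+1 : ℤ) := ⟨m, rfl⟩
          rw [Tc, ho.neg_one_zpow, neg_one_smul, neg_neg]
        · have ho : Odd (2*m+1 : ℤ) := ⟨m, rfl⟩
          rw [Td, ho.neg_one_zpow, neg_one_smul, neg_neg]
        · exact Tk
      | zero => rw [map_zero]
      | add z w _ _ hz hw => rw [map_add, hz, hw]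
      | smul r z _ hz => rw [map_smul, hz]
  · intro x hx y hy
    induction hx using Submodule.span_induction with
    | mem z hz =>
      induction hy using Submodule.span_induction with
      | mem w hw => exact key z hz w hw
      | zero => rw [lie_zero]; exact M.zero_mem
      | add w u _ _ hw hu => rw [lie_add]; exact M.add_mem hw hu
      | smul r w _ hw => rw [lie_smul]; exact M.smul_mem r hw
    | zero => rw [zero_lie]; exact M.zero_mem
    | add z w _ _ hz hw => rw [add_lie]; exact M.add_mem hz hw
    | smul r z _ hz => rw [smul_lie]; exact M.smul_mem r hz
end

section
/- Let g be a complex Lie algebra and n a quasi-nilpotent subalgebra (⋂_k n^k = 0 for the lower central series) such that ad(n) acts locally nilpotently on g/n. If V is a g-module generated by a Whittaker vector of type ψ (a Lie algebra homomorphism ψ: n → ℂ), then x - ψ(x) acts locally nilpotently on V for every x ∈ n. -/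
namespace WhittakerAux

variable {g : Type} [LieRing g] [LieAlgebra ℂ g]
  (n : LieSubalgebra ℂ g) (ψ : n →ₗ[ℂ] ℂ)
  {V : Type} [AddCommGroup V] [Module ℂ V] [LieRingModule g V] [LieModule ℂ g V]

/-- The operator `x - ψ(x)` on `V`, as an endomorphism. -/
noncomputable def W (x : n) : Module.End ℂ V :=
  LieModule.toEnd ℂ g V (x : g) - ψ x • 1

lemma W_apply (x : n) (w : V) : W n ψ x w = ⁅(x : g), w⁆ - ψ x • w := by
  simp [W, LieModule.toEnd]

/-- `u` is killed by every product of `s` operators `W x`. -/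
def Ns (s : ℕ) (u : V) : Prop :=
  ∀ L : List n, L.length = s → (L.map (W n ψ)).prod u = 0

lemma Ns_mono {s s' : ℕ} {u : V} (h : Ns n ψ s u) (hss : s ≤ s') : Ns n ψ s' u := by
  intro L hL
  rw [← List.take_append_drop (s' - s) L, List.map_append, List.prod_append,
    Module.End.mul_apply, h (L.drop (s' - s)) (by simp [hL, Nat.sub_sub_self hss]),
    map_zero]

lemma Ns_W {s : ℕ} {u : V} (h : Ns n ψ (s + 1) u) (x : n) : Ns n ψ s (W n ψ x u) := by
  intro L hL
  have : (L.map (W n ψ)).prod (W n ψ x u) = ((L ++ [x]).map (W n ψ)).prod u := by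
    simp [List.map_append, List.prod_append, Module.End.mul_apply]
  rw [this, h (L ++ [x]) (by simp [hL])]

lemma comm (x : n) (y : g) (u : V) :
    W n ψ x ⁅y, u⁆ = ⁅y, W n ψ x u⁆ + ⁅⁅(x : g), y⁆, u⁆ := by
  simp only [W_apply, lie_sub, lie_smul]
  rw [leibniz_lie]
  abel

/-- The key uniform local-nilpotence bound, by double induction. -/
lemma main : ∀ t s : ℕ, ∃ m : ℕ, ∀ y : g,
    (∀ M : Fin t → n, (List.ofFn M).foldr (fun a w => ⁅(a : g), w⁆) y ∈ n) →
    ∀ u : V, Ns n ψ s u → Ns n ψ m ⁅y, u⁆ := by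
  intro t
  induction t with
  | zero =>
    intro s
    refine ⟨s, fun y hy u hu => ?_⟩
    have hyn : y ∈ n := by simpa using hy (fun i => i.elim0)
    set z : n := ⟨y, hyn⟩ with hz
    have hdecomp : ⁅y, u⁆ = W n ψ z u + ψ z • u := by
      rw [W_apply]; abel
    intro L hL
    rw [hdecomp, map_add, map_smul,
      Ns_W n ψ (Ns_mono n ψ hu (Nat.le_succ s)) z L hL, hu L hL, smul_zero, add_zero]
  | succ t iht =>
    intro s
    induction s with
    | zero =>
      refine ⟨0, fun y hy u hu => ?_⟩
      have hu0 : u = 0 := by simpa using hu [] rfl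
      intro L hL
      simp [hu0]
    | succ s ihs =>
      obtain ⟨m₁, hm₁⟩ := ihs
      obtain ⟨m₂, hm₂⟩ := iht (s + 1)
      refine ⟨max m₁ m₂ + 1, fun y hy u hu => ?_⟩
      intro L hL
      rcases List.eq_nil_or_concat L with rfl | ⟨L₁, x, rfl⟩
      · simp at hL
      · have hL₁ : L₁.length = max m₁ m₂ := by
          simpa [List.length_concat] using hL
        have hy' : ∀ M : Fin t → n,
            (List.ofFn M).foldr (fun a w => ⁅(a : g), w⁆) ⁅(x : g), y⁆ ∈ n := by
          intro M
          have h := hy (Fin.snoc M x)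
          have heq : (List.ofFn (Fin.snoc M x)).foldr (fun a w => ⁅(a : g), w⁆) y
              = (List.ofFn M).foldr (fun a w => ⁅(a : g), w⁆) ⁅(x : g), y⁆ := by
            simp only [List.ofFn_succ', Fin.snoc_castSucc, Fin.snoc_last,
              List.concat_eq_append]
            simp [List.foldr_append]
          rwa [heq] at h
        have h1 : Ns n ψ m₁ ⁅y, W n ψ x u⁆ :=
          hm₁ y hy (W n ψ x u) (Ns_W n ψ hu x)
        have h2 : Ns n ψ m₂ ⁅⁅(x : g), y⁆, u⁆ :=
          hm₂ ⁅(x : g), y⁆ hy' u hu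
        have key : ((L₁.concat x).map (W n ψ)).prod ⁅y, u⁆
            = (L₁.map (W n ψ)).prod (W n ψ x ⁅y, u⁆) := by
          simp [List.concat_eq_append, List.map_append, List.prod_append,
            Module.End.mul_apply]
        rw [key, comm, map_add,
          Ns_mono n ψ h1 (le_max_left m₁ m₂) L₁ hL₁,
          Ns_mono n ψ h2 (le_max_right m₁ m₂) L₁ hL₁, add_zero]

end WhittakerAux

/-- Let `g` be a complex Lie algebra and `n` a quasi-nilpotent Lie subalgebra
(the lower central series of `n` has trivial intersection) such that the adjoint
action of `n` on `g/n` is locally nilpotent (iterated brackets with elements of `n`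
eventually land in `n`).  If `V` is a `g`-module generated by a Whittaker vector `v`
of type `ψ` (a Lie algebra homomorphism `ψ : n → ℂ`), then `x - ψ(x)` acts locally
nilpotently on `V` for every `x ∈ n`. -/
theorem whittaker_locally_nilpotent (g : Type) [LieRing g] [LieAlgebra ℂ g]
    (n : LieSubalgebra ℂ g)
    (hquasi : (⨅ k : ℕ, LieModule.lowerCentralSeries ℂ n n k) = ⊥)
    (hloc : ∀ x : g, ∃ s : ℕ, ∀ y : Fin s → n,
      (List.ofFn y).foldr (fun a w => ⁅(a : g), w⁆) x ∈ n)
    (ψ : n →ₗ[ℂ] ℂ) (hψ : ∀ x y : n, ψ ⁅x, y⁆ = 0)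
    (V : Type) [AddCommGroup V] [Module ℂ V] [LieRingModule g V] [LieModule ℂ g V]
    (v : V) (hv : v ≠ 0)
    (hwh : ∀ x : n, ⁅(x : g), v⁆ = ψ x • v)
    (hgen : ∀ N : LieSubmodule ℂ g V, v ∈ N → N = ⊤) :
    ∀ x : n, ∀ u : V, ∃ s : ℕ,
      ((fun w : V => ⁅(x : g), w⁆ - ψ x • w)^[s]) u = 0 := by
  classical
  set Nset : LieSubmodule ℂ g V :=
    { carrier := {u | ∃ s, WhittakerAux.Ns n ψ s u}
      zero_mem' := ⟨0, fun L _ => map_zero _⟩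
      add_mem' := by
        rintro a b ⟨s₁, h₁⟩ ⟨s₂, h₂⟩
        refine ⟨max s₁ s₂, fun L hL => ?_⟩
        rw [map_add, WhittakerAux.Ns_mono n ψ h₁ (le_max_left s₁ s₂) L hL,
          WhittakerAux.Ns_mono n ψ h₂ (le_max_right s₁ s₂) L hL, add_zero]
      smul_mem' := by
        rintro c a ⟨s, h⟩
        exact ⟨s, fun L hL => by rw [map_smul, h L hL, smul_zero]⟩
      lie_mem := by
        rintro y u ⟨s, hs⟩
        obtain ⟨t, ht⟩ := hloc y
        obtain ⟨m, hm⟩ := WhittakerAux.main n ψ (V := V) t s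
        exact ⟨m, hm y ht u hs⟩ } with hNset
  have hvmem : v ∈ Nset := by
    refine ⟨1, fun L hL => ?_⟩
    obtain ⟨x₀, rfl⟩ := List.length_eq_one_iff.mp hL
    simp [WhittakerAux.W_apply, hwh x₀]
  have htop : Nset = ⊤ := hgen Nset hvmem
  intro x u
  have humem : u ∈ Nset := by
    have h : u ∈ (⊤ : LieSubmodule ℂ g V) := LieSubmodule.mem_top u
    rwa [← htop] at h
  obtain ⟨s, hs⟩ := humem
  refine ⟨s, ?_⟩
  have hiter : ∀ k : ℕ, ∀ w : V,
      ((fun w : V => ⁅(x : g), w⁆ - ψ x • w)^[k]) w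
        = ((List.replicate k x).map (WhittakerAux.W n ψ)).prod w := by
    intro k
    induction k with
    | zero => intro w; simp
    | succ k ih =>
      intro w
      rw [Function.iterate_succ_apply', ih]
      simp [List.replicate_succ, Module.End.mul_apply, WhittakerAux.W_apply]
  rw [hiter s u]
  exact hs (List.replicate s x) List.length_replicate
end
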